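/- Let n be a positive integer, ξ a complex non-real algebraic number of degree greater than n, μ₀ ∈ ℂ* with dim V_n(μ₀,ξ) = t_n(ξ), and suppose t_n(ξ) > (n+1)/2. Then the space W_{n+1} of rational polynomials of degree at most n+1 is the direct sum of V_n(μ₀,ξ) and X·V_n(μ₀,ξ). -/
import Mathlib


open Polynomial

/-- The ℚ-vector space of polynomials `f ∈ ℚ[X]` of degree at most `n`
with `μ * f(ξ) ∈ ℝ`. -/
noncomputable def Vspace (n : ℕ) (μ ξ : ℂ) : Submodule ℚ ℚ[X] where
  carrier := {f | f.natDegree ≤ n ∧ ∃ r : ℝ, μ * aeval ξ f = (r : ℂ)}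
  zero_mem' := ⟨by simp, 0, by simp⟩
  add_mem' := by
    rintro f g ⟨hf, r, hr⟩ ⟨hg, s, hs⟩
    refine ⟨(natDegree_add_le f g).trans (by simp [hf, hg]), r + s, ?_⟩
    push_cast
    rw [map_add, mul_add, hr, hs]
  smul_mem' := by
    rintro c f ⟨hf, r, hr⟩
    refine ⟨(natDegree_smul_le c f).trans hf, c * r, ?_⟩
    rw [map_smul, Algebra.mul_smul_comm, hr, Rat.smul_def]
    push_cast
    ring

/-- `t_n(ξ)`: the maximum over nonzero `μ ∈ ℂ` of `dim_ℚ V_n(μ,ξ)`. -/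
noncomputable def tdeg (n : ℕ) (ξ : ℂ) : ℕ :=
  sSup {d : ℕ | ∃ μ : ℂ, μ ≠ 0 ∧ d = Module.finrank ℚ (Vspace n μ ξ)}

theorem Vspace_direct_sum_decomposition (n : ℕ) (hn : 0 < n) (ξ : ℂ)
    (hξreal : ξ.im ≠ 0) (hξalg : IsAlgebraic ℚ ξ)
    (hdeg : n < (minpoly ℚ ξ).natDegree)
    (μ₀ : ℂ) (hμ₀ : μ₀ ≠ 0)
    (hmax : Module.finrank ℚ (Vspace n μ₀ ξ) = tdeg n ξ)
    (ht : n + 1 < 2 * tdeg n ξ) :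
    Vspace n μ₀ ξ ⊔ (Vspace n μ₀ ξ).map (LinearMap.mulLeft ℚ (X : ℚ[X]))
      = Polynomial.degreeLT ℚ (n + 2) ∧
    Vspace n μ₀ ξ ⊓ (Vspace n μ₀ ξ).map (LinearMap.mulLeft ℚ (X : ℚ[X])) = ⊥ := by
  set V := Vspace n μ₀ ξ with hV
  set XV := V.map (LinearMap.mulLeft ℚ (X : ℚ[X])) with hXV
  have hval : ∀ f : ℚ[X], f ∈ V → f ≠ 0 → aeval ξ f ≠ 0 := by
    intro f hf hf0 h0
    have h1 : (minpoly ℚ ξ).natDegree ≤ f.natDegree :=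
      natDegree_le_natDegree (minpoly.degree_le_of_ne_zero ℚ ξ hf0 h0)
    have h2 : f.natDegree ≤ n := hf.1
    omega
  have hinf : V ⊓ XV = ⊥ := by
    rw [eq_bot_iff]
    rintro f ⟨hfV, g, hgV, rfl⟩
    simp only [LinearMap.mulLeft_apply] at hfV ⊢
    by_cases hg0 : g = 0
    · simp [hg0]
    exfalso
    obtain ⟨hdf, r, hr⟩ := hfV
    obtain ⟨hdg, s, hs⟩ := hgV
    have hs0 : (s : ℂ) ≠ 0 := hs ▸ mul_ne_zero hμ₀ (hval g ⟨hdg, s, hs⟩ hg0)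
    have hrs : (r : ℂ) = ξ * s := by
      rw [← hr, ← hs, map_mul, aeval_X]; ring
    have hξ : ξ = ((r / s : ℝ) : ℂ) := by
      push_cast
      rw [eq_div_iff hs0]
      exact hrs.symm
    exact hξreal (by rw [hξ]; simp)
  have hVle : V ≤ degreeLT ℚ (n + 2) := by
    intro f hf
    rw [mem_degreeLT]
    calc f.degree ≤ (f.natDegree : WithBot ℕ) := degree_le_natDegree
      _ ≤ (n : WithBot ℕ) := by exact_mod_cast hf.1
      _ < ((n + 2 : ℕ) : WithBot ℕ) := by exact_mod_cast by omega
  have hXVle : XV ≤ degreeLT ℚ (n + 2) := by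
    rintro _ ⟨g, hg, rfl⟩
    simp only [LinearMap.mulLeft_apply]
    rw [mem_degreeLT]
    calc (X * g).degree ≤ ((X * g).natDegree : WithBot ℕ) := degree_le_natDegree
      _ ≤ ((n + 1 : ℕ) : WithBot ℕ) := by
          have h1 : (X * g).natDegree ≤ n + 1 :=
            le_trans natDegree_mul_le (by rw [natDegree_X]; have := hg.1; omega)
          exact_mod_cast h1
      _ < ((n + 2 : ℕ) : WithBot ℕ) := by exact_mod_cast by omega
  haveI : FiniteDimensional ℚ (degreeLT ℚ (n + 2)) :=
    Module.Finite.equiv (degreeLTEquiv ℚ (n + 2)).symm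
  haveI : FiniteDimensional ℚ V := Submodule.finiteDimensional_of_le hVle
  haveI : FiniteDimensional ℚ XV := Submodule.finiteDimensional_of_le hXVle
  have hinj : Function.Injective (LinearMap.mulLeft ℚ (X : ℚ[X])) :=
    mul_right_injective₀ X_ne_zero
  have hrk : Module.finrank ℚ XV = Module.finrank ℚ V :=
    ((Submodule.equivMapOfInjective _ hinj V).finrank_eq).symm
  have hdlt : Module.finrank ℚ (degreeLT ℚ (n + 2)) = n + 2 := by
    rw [(degreeLTEquiv ℚ (n + 2)).finrank_eq, Module.finrank_fin_fun]
  have hsum := Submodule.finrank_sup_add_finrank_inf_eq V XV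
  rw [hinf, finrank_bot, add_zero, hrk, hmax] at hsum
  have hsup : V ⊔ XV = degreeLT ℚ (n + 2) := by
    apply Submodule.eq_of_le_of_finrank_le (sup_le hVle hXVle)
    rw [hdlt, hsum]
    omega
  exact ⟨hsup, hinf⟩
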